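/- With κ = 3 in the sl₂ example, the section ṽ(z⃗) = f(z⃗)·[v], where f(z⃗) = (z₁−z₂)^{−1/2}(z₁−z₃)^{1/2}(z₁−z₄)^{1/2}(z₂−z₃)^{1/2}(z₂−z₄)^{1/2}(z₃−z₄)^{−1/2}, is flat for the KZ connection on the quotient line bundle of dual conformal blocks; equivalently, ∇_{∂/∂z_j} ([v]·f) is proportional to Φ(z⃗) for every j, i.e., ∂_j f·[v] + (f/3) Σ_{k≠j} Ω_{jk}[v]/(z_j−z_k) lies in the line spanned by (z₁−z₃)(z₂−z₄)[v] + (z₁−z₂)(z₃−z₄)[w]. -/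
import Mathlib


noncomputable section

/-- The Casimir matrices `Ω_{jk}` of the sl₂ example, acting on coordinates in the
basis `[v], [w]` of the coinvariants:
`Ω_{1,2} = Ω_{3,4} = [[1/2, −1],[0, −3/2]]`,
`Ω_{1,3} = Ω_{2,4} = [[−3/2, 0],[−1, 1/2]]`,
`Ω_{1,4} = Ω_{2,3} = [[−1/2, 1],[1, −1/2]]` (indices here start at `0`). -/
def casMat (j k : Fin 4) : Matrix (Fin 2) (Fin 2) ℂ :=
  if (j = 0 ∧ k = 1) ∨ (j = 1 ∧ k = 0) ∨ (j = 2 ∧ k = 3) ∨ (j = 3 ∧ k = 2) then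
    !![1/2, -1; 0, -3/2]
  else if (j = 0 ∧ k = 2) ∨ (j = 2 ∧ k = 0) ∨ (j = 1 ∧ k = 3) ∨ (j = 3 ∧ k = 1) then
    !![-3/2, 0; -1, 1/2]
  else !![-1/2, 1; 1, -1/2]

/-- `Φ(z⃗) = ((z₁−z₃)(z₂−z₄), (z₁−z₂)(z₃−z₄))` in coordinates w.r.t. `[v], [w]`. -/
def PhiVec (z : Fin 4 → ℂ) : Fin 2 → ℂ :=
  ![(z 0 - z 2) * (z 1 - z 3), (z 0 - z 1) * (z 2 - z 3)]


/-- The exponents of the multivalued prefactor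
`f(z⃗) = (z₁−z₂)^{−1/2}(z₁−z₃)^{1/2}(z₁−z₄)^{1/2}(z₂−z₃)^{1/2}(z₂−z₄)^{1/2}(z₃−z₄)^{−1/2}`:
`cexp j k` is the exponent of `(z_j − z_k)` (symmetric in `j,k`). -/
def cexp (j k : Fin 4) : ℂ :=
  if (j = 0 ∧ k = 1) ∨ (j = 1 ∧ k = 0) ∨ (j = 2 ∧ k = 3) ∨ (j = 3 ∧ k = 2) then
    -(1/2) else 1/2

/-- The logarithmic derivative `∂_j f / f = Σ_{k≠j} cexp j k/(z_j − z_k)` of the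
multivalued function `f`. -/
def logDf (j : Fin 4) (z : Fin 4 → ℂ) : ℂ :=
  ∑ k ∈ Finset.univ.erase j, cexp j k / (z j - z k)

/-- The coordinate vector of `[v]`. -/
def evec : Fin 2 → ℂ := ![1, 0]

/-- With `κ = 3`, the section `ṽ = f·[v]` is flat for the KZ
connection on the quotient line bundle of dual conformal blocks: for every branch
value `fz` of `f` at `z⃗` (whose `z_j`-derivative is then `logDf j z · fz`),
`∂_j f·[v] + (f/3) Σ_{k≠j} Ω_{jk}[v]/(z_j−z_k)` lies in the line spanned by
`Φ(z⃗) = (z₁−z₃)(z₂−z₄)[v] + (z₁−z₂)(z₃−z₄)[w]`. -/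

private theorem span_crit (x y : Fin 2 → ℂ) (hy : y 1 ≠ 0) (hcross : x 0 * y 1 = x 1 * y 0) :
    x ∈ Submodule.span ℂ {y} := by
  rw [Submodule.mem_span_singleton]
  refine ⟨x 1 / y 1, ?_⟩
  funext i
  fin_cases i
  · show x 1 / y 1 * y 0 = x 0
    rw [div_mul_eq_mul_div, eq_comm, eq_div_iff hy]
    exact hcross
  · show x 1 / y 1 * y 1 = x 1
    rw [div_mul_cancel₀ _ hy]

private theorem cross0 (z : Fin 4 → ℂ) (fz : ℂ)
    (h : ∀ i j : Fin 4, i ≠ j → z i - z j ≠ 0) :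
    (((∑ k : Fin 4, cexp 0 k / (z 0 - z k)) * fz) • evec +
          (fz / 3) • ∑ k : Fin 4, (z 0 - z k)⁻¹ • (casMat 0 k).mulVec evec)
        0 *
      PhiVec z 1 =
    (((∑ k : Fin 4, cexp 0 k / (z 0 - z k)) * fz) • evec +
          (fz / 3) • ∑ k : Fin 4, (z 0 - z k)⁻¹ • (casMat 0 k).mulVec evec)
        1 *
      PhiVec z 0 := by
  have h1 := mul_inv_cancel₀ (h 0 1 (by decide))
  have h2 := mul_inv_cancel₀ (h 0 2 (by decide))
  have h3 := mul_inv_cancel₀ (h 0 3 (by decide))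
  simp only [Pi.add_apply, Pi.smul_apply, Finset.sum_apply, Fin.sum_univ_four,
    smul_eq_mul, sub_self, div_zero, inv_zero, zero_smul, show casMat 0 1 = !![1/2, -1; 0, -3/2] from rfl, show casMat 0 2 = !![-3/2, 0; -1, 1/2] from rfl, show casMat 0 3 = !![-1/2, 1; 1, -1/2] from rfl, show cexp 0 1 = (-(1/2) : ℂ) from rfl, show cexp 0 2 = (1/2 : ℂ) from rfl, show cexp 0 3 = (1/2 : ℂ) from rfl,
    PhiVec, evec, Matrix.mulVec, dotProduct, Fin.sum_univ_two,
    Matrix.cons_val', Matrix.cons_val_zero, Matrix.cons_val_one, Matrix.head_cons,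
    Matrix.empty_val', Matrix.cons_val_fin_one, Matrix.head_fin_const, Matrix.of_apply,
    Pi.zero_apply]
  linear_combination (-(fz/3) * (z 2 - z 3)) * h1 + ((fz/3) * (z 1 - z 3)) * h2 + ((fz/3) * (z 2 - z 1)) * h3

private theorem cross1 (z : Fin 4 → ℂ) (fz : ℂ)
    (h : ∀ i j : Fin 4, i ≠ j → z i - z j ≠ 0) :
    (((∑ k : Fin 4, cexp 1 k / (z 1 - z k)) * fz) • evec +
          (fz / 3) • ∑ k : Fin 4, (z 1 - z k)⁻¹ • (casMat 1 k).mulVec evec)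
        0 *
      PhiVec z 1 =
    (((∑ k : Fin 4, cexp 1 k / (z 1 - z k)) * fz) • evec +
          (fz / 3) • ∑ k : Fin 4, (z 1 - z k)⁻¹ • (casMat 1 k).mulVec evec)
        1 *
      PhiVec z 0 := by
  have h1 := mul_inv_cancel₀ (h 1 0 (by decide))
  have h2 := mul_inv_cancel₀ (h 1 2 (by decide))
  have h3 := mul_inv_cancel₀ (h 1 3 (by decide))
  simp only [Pi.add_apply, Pi.smul_apply, Finset.sum_apply, Fin.sum_univ_four,
    smul_eq_mul, sub_self, div_zero, inv_zero, zero_smul, show casMat 1 0 = !![1/2, -1; 0, -3/2] from rfl, show casMat 1 2 = !![-1/2, 1; 1, -1/2] from rfl, show casMat 1 3 = !![-3/2, 0; -1, 1/2] from rfl, show cexp 1 0 = (-(1/2) : ℂ) from rfl, show cexp 1 2 = (1/2 : ℂ) from rfl, show cexp 1 3 = (1/2 : ℂ) from rfl,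
    PhiVec, evec, Matrix.mulVec, dotProduct, Fin.sum_univ_two,
    Matrix.cons_val', Matrix.cons_val_zero, Matrix.cons_val_one, Matrix.head_cons,
    Matrix.empty_val', Matrix.cons_val_fin_one, Matrix.head_fin_const, Matrix.of_apply,
    Pi.zero_apply]
  linear_combination ((fz/3) * (z 2 - z 3)) * h1 + (-(fz/3) * (z 0 - z 3)) * h2 + ((fz/3) * (z 0 - z 2)) * h3

private theorem cross2 (z : Fin 4 → ℂ) (fz : ℂ)
    (h : ∀ i j : Fin 4, i ≠ j → z i - z j ≠ 0) :
    (((∑ k : Fin 4, cexp 2 k / (z 2 - z k)) * fz) • evec +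
          (fz / 3) • ∑ k : Fin 4, (z 2 - z k)⁻¹ • (casMat 2 k).mulVec evec)
        0 *
      PhiVec z 1 =
    (((∑ k : Fin 4, cexp 2 k / (z 2 - z k)) * fz) • evec +
          (fz / 3) • ∑ k : Fin 4, (z 2 - z k)⁻¹ • (casMat 2 k).mulVec evec)
        1 *
      PhiVec z 0 := by
  have h1 := mul_inv_cancel₀ (h 2 0 (by decide))
  have h2 := mul_inv_cancel₀ (h 2 1 (by decide))
  have h3 := mul_inv_cancel₀ (h 2 3 (by decide))
  simp only [Pi.add_apply, Pi.smul_apply, Finset.sum_apply, Fin.sum_univ_four,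
    smul_eq_mul, sub_self, div_zero, inv_zero, zero_smul, show casMat 2 0 = !![-3/2, 0; -1, 1/2] from rfl, show casMat 2 1 = !![-1/2, 1; 1, -1/2] from rfl, show casMat 2 3 = !![1/2, -1; 0, -3/2] from rfl, show cexp 2 0 = (1/2 : ℂ) from rfl, show cexp 2 1 = (1/2 : ℂ) from rfl, show cexp 2 3 = (-(1/2) : ℂ) from rfl,
    PhiVec, evec, Matrix.mulVec, dotProduct, Fin.sum_univ_two,
    Matrix.cons_val', Matrix.cons_val_zero, Matrix.cons_val_one, Matrix.head_cons,
    Matrix.empty_val', Matrix.cons_val_fin_one, Matrix.head_fin_const, Matrix.of_apply,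
    Pi.zero_apply]
  linear_combination (-(fz/3) * (z 1 - z 3)) * h1 + ((fz/3) * (z 0 - z 3)) * h2 + (-(fz/3) * (z 0 - z 1)) * h3

private theorem cross3 (z : Fin 4 → ℂ) (fz : ℂ)
    (h : ∀ i j : Fin 4, i ≠ j → z i - z j ≠ 0) :
    (((∑ k : Fin 4, cexp 3 k / (z 3 - z k)) * fz) • evec +
          (fz / 3) • ∑ k : Fin 4, (z 3 - z k)⁻¹ • (casMat 3 k).mulVec evec)
        0 *
      PhiVec z 1 =
    (((∑ k : Fin 4, cexp 3 k / (z 3 - z k)) * fz) • evec +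
          (fz / 3) • ∑ k : Fin 4, (z 3 - z k)⁻¹ • (casMat 3 k).mulVec evec)
        1 *
      PhiVec z 0 := by
  have h1 := mul_inv_cancel₀ (h 3 0 (by decide))
  have h2 := mul_inv_cancel₀ (h 3 1 (by decide))
  have h3 := mul_inv_cancel₀ (h 3 2 (by decide))
  simp only [Pi.add_apply, Pi.smul_apply, Finset.sum_apply, Fin.sum_univ_four,
    smul_eq_mul, sub_self, div_zero, inv_zero, zero_smul, show casMat 3 0 = !![-1/2, 1; 1, -1/2] from rfl, show casMat 3 1 = !![-3/2, 0; -1, 1/2] from rfl, show casMat 3 2 = !![1/2, -1; 0, -3/2] from rfl, show cexp 3 0 = (1/2 : ℂ) from rfl, show cexp 3 1 = (1/2 : ℂ) from rfl, show cexp 3 2 = (-(1/2) : ℂ) from rfl,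
    PhiVec, evec, Matrix.mulVec, dotProduct, Fin.sum_univ_two,
    Matrix.cons_val', Matrix.cons_val_zero, Matrix.cons_val_one, Matrix.head_cons,
    Matrix.empty_val', Matrix.cons_val_fin_one, Matrix.head_fin_const, Matrix.of_apply,
    Pi.zero_apply]
  linear_combination ((fz/3) * (z 1 - z 2)) * h1 + (-(fz/3) * (z 0 - z 2)) * h2 + ((fz/3) * (z 0 - z 1)) * h3

theorem kz_flat_on_quotient (z : Fin 4 → ℂ)
    (hz : ∀ i j : Fin 4, i ≠ j → z i ≠ z j) (j : Fin 4)
    (fz dfz : ℂ) (hdf : dfz = logDf j z * fz) :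
    dfz • evec
      + (fz / 3) • ∑ k ∈ Finset.univ.erase j,
          (z j - z k)⁻¹ • (casMat j k).mulVec evec
      ∈ Submodule.span ℂ {PhiVec z} := by

  subst hdf
  have h : ∀ i j : Fin 4, i ≠ j → z i - z j ≠ 0 :=
    fun i j hij => sub_ne_zero.mpr (hz i j hij)
  have hL : logDf j z = ∑ k, cexp j k / (z j - z k) := by
    rw [logDf]
    exact Finset.sum_erase _ (by rw [sub_self, div_zero])
  have hS : (∑ k ∈ Finset.univ.erase j, (z j - z k)⁻¹ • (casMat j k).mulVec evec)
      = ∑ k, (z j - z k)⁻¹ • (casMat j k).mulVec evec :=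
    Finset.sum_erase _ (by rw [sub_self, inv_zero, zero_smul])
  rw [hL, hS]
  refine span_crit _ _ (by
    show (z 0 - z 1) * (z 2 - z 3) ≠ 0
    exact mul_ne_zero (h 0 1 (by decide)) (h 2 3 (by decide))) ?_
  have hj : j = 0 ∨ j = 1 ∨ j = 2 ∨ j = 3 := by fin_cases j <;> simp
  rcases hj with rfl | rfl | rfl | rfl
  · exact cross0 z fz h
  · exact cross1 z fz h
  · exact cross2 z fz h
  · exact cross3 z fz h
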